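/- Let P be an n×n real row-stochastic matrix (all entries nonnegative and every row sums to 1). Then the Cesàro averages (1/m) ∑_{k=0}^{m−1} P^k converge as m → ∞ to a matrix P*, which is itself row-stochastic. -/

import Mathlib

open Finset Filter Topology

/-- A square real matrix is row-stochastic if all entries are nonnegative and
every row sums to 1. -/
def RowStochastic {n : ℕ} (P : Matrix (Fin n) (Fin n) ℝ) : Prop :=
  (∀ i j, 0 ≤ P i j) ∧ ∀ i, ∑ j, P i j = 1

lemma RowStochastic.mul {n : ℕ} {P Q : Matrix (Fin n) (Fin n) ℝ}
    (hP : RowStochastic P) (hQ : RowStochastic Q) : RowStochastic (P * Q) := by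
  constructor
  · intro i j
    rw [Matrix.mul_apply]
    exact Finset.sum_nonneg fun k _ => mul_nonneg (hP.1 i k) (hQ.1 k j)
  · intro i
    calc ∑ j, (P * Q) i j = ∑ j, ∑ k, P i k * Q k j := by
          simp [Matrix.mul_apply]
      _ = ∑ k, ∑ j, P i k * Q k j := Finset.sum_comm
      _ = ∑ k, P i k * ∑ j, Q k j := by simp [Finset.mul_sum]
      _ = 1 := by simp [hQ.2, hP.2 i]

lemma RowStochastic.one {n : ℕ} : RowStochastic (1 : Matrix (Fin n) (Fin n) ℝ) := by
  constructor
  · intro i j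
    rw [Matrix.one_apply]
    split <;> norm_num
  · intro i
    simp [Matrix.one_apply]

lemma RowStochastic.pow {n : ℕ} {P : Matrix (Fin n) (Fin n) ℝ}
    (hP : RowStochastic P) (k : ℕ) : RowStochastic (P ^ k) := by
  induction k with
  | zero => simpa using RowStochastic.one
  | succ k ih => rw [pow_succ]; exact ih.mul hP

lemma RowStochastic.entry_le_one {n : ℕ} {P : Matrix (Fin n) (Fin n) ℝ}
    (hP : RowStochastic P) (i j : Fin n) : P i j ≤ 1 := by
  calc P i j ≤ ∑ j', P i j' :=
        Finset.single_le_sum (fun j' _ => hP.1 i j') (Finset.mem_univ j)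
    _ = 1 := hP.2 i

/-- for a row-stochastic matrix `P`, the Cesàro averages
`(1/m) ∑_{k<m} P^k` converge to a matrix `P*`, which is itself row-stochastic. -/
theorem cesaro_limit_exists {n : ℕ} (P : Matrix (Fin n) (Fin n) ℝ)
    (hP : RowStochastic P) :
    ∃ Pstar : Matrix (Fin n) (Fin n) ℝ,
      Tendsto (fun m : ℕ => (m : ℝ)⁻¹ • ∑ k ∈ Finset.range m, P ^ k)
        atTop (𝓝 Pstar) ∧ RowStochastic Pstar := by
  set A : ℕ → Matrix (Fin n) (Fin n) ℝ :=
    fun m => (m : ℝ)⁻¹ • ∑ k ∈ Finset.range m, P ^ k with hA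
  -- entries of powers are in [0,1]
  have hpow : ∀ k, RowStochastic (P ^ k) := hP.pow
  have hpow0 : ∀ k i j, 0 ≤ (P ^ k) i j := fun k => (hpow k).1
  have hpow1 : ∀ k i j, (P ^ k) i j ≤ 1 := fun k => (hpow k).entry_le_one
  have hAentry : ∀ m i j, A m i j = (m : ℝ)⁻¹ * ∑ k ∈ Finset.range m, (P ^ k) i j := by
    intro m i j
    simp [hA, Matrix.sum_apply]
  -- the compact box
  set K : Set (Matrix (Fin n) (Fin n) ℝ) :=
    Set.univ.pi fun _ : Fin n => Set.univ.pi fun _ : Fin n => Set.Icc (0 : ℝ) 1 with hKdef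
  have hKmem : ∀ M : Matrix (Fin n) (Fin n) ℝ,
      M ∈ K ↔ ∀ i j, M i j ∈ Set.Icc (0 : ℝ) 1 := by
    intro M
    rw [hKdef]
    exact ⟨fun h i j => h i trivial j trivial, fun h i _ j _ => h i j⟩
  haveI : FirstCountableTopology (Matrix (Fin n) (Fin n) ℝ) :=
    inferInstanceAs (FirstCountableTopology (Fin n → Fin n → ℝ))
  have hK : IsCompact K :=
    isCompact_univ_pi fun _ => isCompact_univ_pi fun _ => isCompact_Icc
  have hAK : ∀ m, A m ∈ K := by
    intro m
    rw [hKmem]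
    intro i j
    rcases Nat.eq_zero_or_pos m with hm | hm
    · subst hm
      simp [hAentry]
    · have hmpos : (0 : ℝ) < m := by exact_mod_cast hm
      have hsum0 : 0 ≤ ∑ k ∈ Finset.range m, (P ^ k) i j :=
        Finset.sum_nonneg fun k _ => hpow0 k i j
      have hsum1 : ∑ k ∈ Finset.range m, (P ^ k) i j ≤ m := by
        calc ∑ k ∈ Finset.range m, (P ^ k) i j ≤ ∑ _k ∈ Finset.range m, (1 : ℝ) :=
              Finset.sum_le_sum fun k _ => hpow1 k i j
          _ = m := by simp
      rw [hAentry]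
      constructor
      · positivity
      · calc (m : ℝ)⁻¹ * ∑ k ∈ Finset.range m, (P ^ k) i j ≤ (m : ℝ)⁻¹ * m := by
              exact mul_le_mul_of_nonneg_left hsum1 (by positivity)
          _ = 1 := inv_mul_cancel₀ hmpos.ne'
  -- row sums of A m (for m ≥ 1)
  have hrow : ∀ m : ℕ, 1 ≤ m → ∀ i, ∑ j, A m i j = 1 := by
    intro m hm i
    have hmpos : (0 : ℝ) < m := by exact_mod_cast hm
    calc ∑ j, A m i j = (m : ℝ)⁻¹ * ∑ j, ∑ k ∈ Finset.range m, (P ^ k) i j := by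
          simp [hAentry, Finset.mul_sum]
      _ = (m : ℝ)⁻¹ * ∑ k ∈ Finset.range m, ∑ j, (P ^ k) i j := by rw [Finset.sum_comm]
      _ = (m : ℝ)⁻¹ * m := by
          simp [fun k => (hpow k).2 i]
      _ = 1 := inv_mul_cancel₀ hmpos.ne'
  -- vanishing term
  have hvan : Tendsto (fun m : ℕ => (m : ℝ)⁻¹ • (P ^ m - 1 : Matrix (Fin n) (Fin n) ℝ))
      atTop (𝓝 0) := by
    apply tendsto_pi_nhds.mpr
    intro i
    rw [tendsto_pi_nhds]
    intro j
    have hbound : ∀ m : ℕ, ‖((m : ℝ)⁻¹ • (P ^ m - 1 : Matrix (Fin n) (Fin n) ℝ)) i j‖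
        ≤ (m : ℝ)⁻¹ := by
      intro m
      have h1 : ((m : ℝ)⁻¹ • (P ^ m - 1 : Matrix (Fin n) (Fin n) ℝ)) i j
          = (m : ℝ)⁻¹ * ((P ^ m) i j - (1 : Matrix (Fin n) (Fin n) ℝ) i j) := by
        simp [Matrix.sub_apply]
      have h2 : |(P ^ m) i j - (1 : Matrix (Fin n) (Fin n) ℝ) i j| ≤ 1 := by
        have ha := hpow0 m i j
        have hb := hpow1 m i j
        have hc := RowStochastic.one (n := n) |>.1 i j
        have hd := RowStochastic.one (n := n) |>.entry_le_one i j
        rw [abs_sub_le_iff]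
        constructor <;> linarith
      rw [h1, Real.norm_eq_abs, abs_mul, abs_of_nonneg (by positivity : (0:ℝ) ≤ (m:ℝ)⁻¹)]
      calc (m : ℝ)⁻¹ * |(P ^ m) i j - (1 : Matrix (Fin n) (Fin n) ℝ) i j|
          ≤ (m : ℝ)⁻¹ * 1 := mul_le_mul_of_nonneg_left h2 (by positivity)
        _ = (m : ℝ)⁻¹ := mul_one _
    have := squeeze_zero_norm hbound tendsto_inv_atTop_nhds_zero_nat
    simpa using this
  -- the algebraic identities
  have hiden : ∀ m : ℕ, A m * P = A m + (m : ℝ)⁻¹ • (P ^ m - 1) := by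
    intro m
    have h1 : (∑ k ∈ Finset.range m, P ^ k) * P
        = (∑ k ∈ Finset.range m, P ^ k) + (P ^ m - 1) := by
      have h := geom_sum_mul P m
      rw [mul_sub, mul_one] at h
      exact sub_eq_iff_eq_add'.mp h
    rw [hA]
    simp only [smul_mul_assoc]
    rw [h1, smul_add]
  have hiden' : ∀ m : ℕ, P * A m = A m + (m : ℝ)⁻¹ • (P ^ m - 1) := by
    intro m
    have h1 : P * ∑ k ∈ Finset.range m, P ^ k
        = (∑ k ∈ Finset.range m, P ^ k) + (P ^ m - 1) := by
      have h := mul_geom_sum P m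
      rw [sub_mul, one_mul] at h
      exact sub_eq_iff_eq_add'.mp h
    rw [hA]
    simp only [mul_smul_comm]
    rw [h1, smul_add]
  -- any subsequential limit is a two-sided fixed point
  have hfix : ∀ (ψ : ℕ → ℕ) (L : Matrix (Fin n) (Fin n) ℝ), Tendsto ψ atTop atTop →
      Tendsto (fun m => A (ψ m)) atTop (𝓝 L) → P * L = L ∧ L * P = L := by
    intro ψ L hψ hL
    have hvψ : Tendsto (fun m => ((ψ m : ℝ))⁻¹ • (P ^ (ψ m) - 1 : Matrix (Fin n) (Fin n) ℝ))
        atTop (𝓝 0) := hvan.comp hψ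
    constructor
    · have h1 : Tendsto (fun m => P * A (ψ m)) atTop (𝓝 (P * L)) :=
        ((continuous_const.matrix_mul continuous_id).tendsto L).comp hL
      have h2 : Tendsto (fun m => P * A (ψ m)) atTop (𝓝 (L + 0)) :=
        (hL.add hvψ).congr fun m => (hiden' (ψ m)).symm
      have := tendsto_nhds_unique h1 h2
      rwa [add_zero] at this
    · have h1 : Tendsto (fun m => A (ψ m) * P) atTop (𝓝 (L * P)) :=
        ((continuous_id.matrix_mul continuous_const).tendsto L).comp hL
      have h2 : Tendsto (fun m => A (ψ m) * P) atTop (𝓝 (L + 0)) :=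
        (hL.add hvψ).congr fun m => (hiden (ψ m)).symm
      have := tendsto_nhds_unique h1 h2
      rwa [add_zero] at this
  -- fixed points absorb Cesàro averages
  have hAfixR : ∀ L : Matrix (Fin n) (Fin n) ℝ, L * P = L → ∀ m : ℕ, 1 ≤ m → L * A m = L := by
    intro L hL m hm
    have hmpos : (0 : ℝ) < m := by exact_mod_cast hm
    have hpowfix : ∀ k, L * P ^ k = L := by
      intro k
      induction k with
      | zero => simp
      | succ k ih => rw [pow_succ, ← mul_assoc, ih, hL]
    calc L * A m = (m : ℝ)⁻¹ • (L * ∑ k ∈ Finset.range m, P ^ k) := by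
          rw [hA]; exact mul_smul_comm _ _ _
      _ = (m : ℝ)⁻¹ • ∑ k ∈ Finset.range m, L * P ^ k := by rw [Finset.mul_sum]
      _ = (m : ℝ)⁻¹ • ((m : ℕ) • L) := by
          rw [Finset.sum_congr rfl fun k _ => hpowfix k, Finset.sum_const, Finset.card_range]
      _ = L := by
          rw [← Nat.cast_smul_eq_nsmul ℝ, smul_smul, inv_mul_cancel₀ hmpos.ne', one_smul]
  have hAfixL : ∀ L : Matrix (Fin n) (Fin n) ℝ, P * L = L → ∀ m : ℕ, 1 ≤ m → A m * L = L := by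
    intro L hL m hm
    have hmpos : (0 : ℝ) < m := by exact_mod_cast hm
    have hpowfix : ∀ k, P ^ k * L = L := by
      intro k
      induction k with
      | zero => simp
      | succ k ih => rw [pow_succ, mul_assoc, hL, ih]
    calc A m * L = (m : ℝ)⁻¹ • ((∑ k ∈ Finset.range m, P ^ k) * L) := by
          rw [hA]; exact smul_mul_assoc _ _ _
      _ = (m : ℝ)⁻¹ • ∑ k ∈ Finset.range m, P ^ k * L := by rw [Finset.sum_mul]
      _ = (m : ℝ)⁻¹ • ((m : ℕ) • L) := by
          rw [Finset.sum_congr rfl fun k _ => hpowfix k, Finset.sum_const, Finset.card_range]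
      _ = L := by
          rw [← Nat.cast_smul_eq_nsmul ℝ, smul_smul, inv_mul_cancel₀ hmpos.ne', one_smul]
  -- extract a subsequential limit L
  obtain ⟨L, hLK, φ, hφ, hφL⟩ := hK.tendsto_subseq hAK
  have hφtop : Tendsto φ atTop atTop := hφ.tendsto_atTop
  have hLfix : P * L = L ∧ L * P = L := hfix φ L hφtop hφL
  refine ⟨L, ?_, ?_, ?_⟩
  · -- convergence of the whole sequence
    apply tendsto_of_subseq_tendsto
    intro ns hns
    obtain ⟨L', hL'K, ms, hms, hmsL'⟩ := hK.tendsto_subseq fun m => hAK (ns m)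
    have hψtop : Tendsto (fun m => ns (ms m)) atTop atTop := hns.comp hms.tendsto_atTop
    have hmsL'' : Tendsto (fun m => A (ns (ms m))) atTop (𝓝 L') := hmsL'
    have hL'fix : P * L' = L' ∧ L' * P = L' := hfix _ L' hψtop hmsL''
    -- L' * L = L
    have e1 : L' * L = L := by
      have ht : Tendsto (fun m => A (ns (ms m)) * L) atTop (𝓝 (L' * L)) :=
        ((continuous_id.matrix_mul continuous_const).tendsto L').comp hmsL''
      have he : ∀ᶠ m in atTop, A (ns (ms m)) * L = L :=
        (hψtop.eventually_ge_atTop 1).mono fun m hm => hAfixL L hLfix.1 _ hm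
      exact tendsto_nhds_unique (ht.congr' he) tendsto_const_nhds
    -- L' * L = L'
    have e2 : L' * L = L' := by
      have ht : Tendsto (fun m => L' * A (φ m)) atTop (𝓝 (L' * L)) :=
        ((continuous_const.matrix_mul continuous_id).tendsto L).comp hφL
      have he : ∀ᶠ m in atTop, L' * A (φ m) = L' :=
        (hφtop.eventually_ge_atTop 1).mono fun m hm => hAfixR L' hL'fix.2 _ hm
      exact tendsto_nhds_unique (ht.congr' he) tendsto_const_nhds
    have hLL : L' = L := by rw [← e2, e1]
    exact ⟨ms, hLL ▸ hmsL''⟩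
  · -- nonnegativity
    intro i j
    exact ((hKmem L).mp hLK i j).1
  · -- row sums
    intro i
    have hij : ∀ i j, Tendsto (fun m => A (φ m) i j) atTop (𝓝 (L i j)) := by
      intro i j
      exact (tendsto_pi_nhds.mp (tendsto_pi_nhds.mp hφL i) j)
    have h1 : Tendsto (fun m => ∑ j, A (φ m) i j) atTop (𝓝 (∑ j, L i j)) :=
      tendsto_finset_sum _ fun j _ => hij i j
    have he : ∀ᶠ m in atTop, ∑ j, A (φ m) i j = 1 :=
      (hφtop.eventually_ge_atTop 1).mono fun m hm => hrow _ hm i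
    exact tendsto_nhds_unique (h1.congr' he) tendsto_const_nhds
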